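/- For every L ≥ 1 there exists a constant c₁(L) > 0 depending only on L such that the following holds. Let X be a centered random vector in ℝ^d satisfying the L₄–L₂ norm equivalence with constant L, with covariance Σ. For α > 0 let Z = X·1_{‖X‖₂ ≤ α} and let B = 𝔼((Z⊗Z)²) (the expectation of the square of the rank-one matrix Z Zᵀ). Then ‖B‖ ≤ c₁(L) ‖Σ‖ Tr(Σ) and Tr(B) ≤ c₁(L) (Tr(Σ))². -/

import Mathlib

open MeasureTheory ProbabilityTheory
open scoped RealInnerProductSpace

/-- The ℓ₂→ℓ₂ operator norm of a `d × d` real matrix. -/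
noncomputable def matOpNorm {d : ℕ} (A : Matrix (Fin d) (Fin d) ℝ) : ℝ :=
  ‖Matrix.toEuclideanCLM (𝕜 := ℝ) (n := Fin d) A‖

/-- The outer product `z zᵀ` of a vector with itself. -/
noncomputable def outerMat {d : ℕ} (z : EuclideanSpace ℝ (Fin d)) :
    Matrix (Fin d) (Fin d) ℝ := Matrix.of fun i j => z i * z j

/-- Covariance-type matrix `𝔼 (X ⊗ X)` of a random vector. -/
noncomputable def covMat {Ω : Type*} [MeasurableSpace Ω] (P : Measure Ω) {d : ℕ}
    (X : Ω → EuclideanSpace ℝ (Fin d)) : Matrix (Fin d) (Fin d) ℝ :=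
  Matrix.of fun i j => ∫ ω, X ω i * X ω j ∂P

/-- Effective rank `Tr(A)/‖A‖`. -/
noncomputable def effRank {d : ℕ} (A : Matrix (Fin d) (Fin d) ℝ) : ℝ :=
  A.trace / matOpNorm A

/-- The squared weak variance `R_Z² = sup_{u,v ∈ S^{d-1}} 𝔼 (vᵀ (Z⊗Z - 𝔼 Z⊗Z) u)²`. -/
noncomputable def weakVarSq {Ω : Type*} [MeasurableSpace Ω] (P : Measure Ω) {d : ℕ}
    (Z : Ω → EuclideanSpace ℝ (Fin d)) : ℝ :=
  ⨆ p : Metric.sphere (0 : EuclideanSpace ℝ (Fin d)) 1 ×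
        Metric.sphere (0 : EuclideanSpace ℝ (Fin d)) 1,
    ∫ ω, (∑ i, ∑ j,
      (p.2 : EuclideanSpace ℝ (Fin d)) i * (Z ω i * Z ω j - covMat P Z i j) *
      (p.1 : EuclideanSpace ℝ (Fin d)) j) ^ 2 ∂P

/-- The weak variance `R_Z`. -/
noncomputable def weakVar {Ω : Type*} [MeasurableSpace Ω] (P : Measure Ω) {d : ℕ}
    (Z : Ω → EuclideanSpace ℝ (Fin d)) : ℝ :=
  Real.sqrt (weakVarSq P Z)

/-- Truncation `X 1_{‖X‖₂ ≤ α}`. -/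
noncomputable def trunc {Ω : Type*} {d : ℕ} (X : Ω → EuclideanSpace ℝ (Fin d)) (α : ℝ) :
    Ω → EuclideanSpace ℝ (Fin d) := fun ω => if ‖X ω‖ ≤ α then X ω else 0

/-- `X` is a centered random vector. -/
def IsCentered {Ω : Type*} [MeasurableSpace Ω] (P : Measure Ω) {d : ℕ}
    (X : Ω → EuclideanSpace ℝ (Fin d)) : Prop :=
  ∀ i : Fin d, ∫ ω, X ω i ∂P = 0

/-- `X` is `L`-subgaussian: all moments exist and
`(𝔼|⟨X,t⟩|^p)^{1/p} ≤ L √p (𝔼⟨X,t⟩²)^{1/2}` for all `t` and `p ≥ 2`. -/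
def IsLSubgaussian {Ω : Type*} [MeasurableSpace Ω] (P : Measure Ω) {d : ℕ}
    (X : Ω → EuclideanSpace ℝ (Fin d)) (L : ℝ) : Prop :=
  ∀ t : EuclideanSpace ℝ (Fin d), ∀ p : ℝ, 2 ≤ p →
    Integrable (fun ω => |⟪X ω, t⟫| ^ p) P ∧
    (∫ ω, |⟪X ω, t⟫| ^ p ∂P) ^ (1 / p) ≤
      L * Real.sqrt p * (∫ ω, ⟪X ω, t⟫ ^ 2 ∂P) ^ ((1 : ℝ) / 2)

/-- A centered `X` satisfies `L₄-L₂` norm equivalence with constant `L`: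
fourth moments exist and `(𝔼⟨X,t⟩⁴)^{1/4} ≤ L (𝔼⟨X,t⟩²)^{1/2}` for all `t`. -/
def SatisfiesL4L2 {Ω : Type*} [MeasurableSpace Ω] (P : Measure Ω) {d : ℕ}
    (X : Ω → EuclideanSpace ℝ (Fin d)) (L : ℝ) : Prop :=
  ∀ t : EuclideanSpace ℝ (Fin d),
    Integrable (fun ω => ⟪X ω, t⟫ ^ 4) P ∧
    (∫ ω, ⟪X ω, t⟫ ^ 4 ∂P) ^ ((1 : ℝ) / 4) ≤
      L * (∫ ω, ⟪X ω, t⟫ ^ 2 ∂P) ^ ((1 : ℝ) / 2)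

/-- `Xi` is a sequence of independent copies of `X`. -/
def IIDCopies {Ω : Type*} [MeasurableSpace Ω] (P : Measure Ω) {d N : ℕ}
    (X : Ω → EuclideanSpace ℝ (Fin d)) (Xi : Fin N → Ω → EuclideanSpace ℝ (Fin d)) : Prop :=
  (∀ i, Measurable (Xi i)) ∧ iIndepFun Xi P ∧
    ∀ i, Measure.map (Xi i) P = Measure.map X P

/-- Cauchy–Schwarz inequality for integrals of real functions. -/
lemma integral_mul_le_sqrt_mul_sqrt {Ω : Type*} [MeasurableSpace Ω] {P : Measure Ω}
    {f g : Ω → ℝ} (hf : Integrable (fun ω => f ω ^ 2) P)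
    (hg : Integrable (fun ω => g ω ^ 2) P) (hfg : Integrable (fun ω => f ω * g ω) P) :
    ∫ ω, f ω * g ω ∂P ≤ Real.sqrt (∫ ω, f ω ^ 2 ∂P) * Real.sqrt (∫ ω, g ω ^ 2 ∂P) := by
  set A := Real.sqrt (∫ ω, f ω ^ 2 ∂P) with hA
  set B := Real.sqrt (∫ ω, g ω ^ 2 ∂P) with hB
  have hf0 : 0 ≤ ∫ ω, f ω ^ 2 ∂P := integral_nonneg fun ω => sq_nonneg _
  have hg0 : 0 ≤ ∫ ω, g ω ^ 2 ∂P := integral_nonneg fun ω => sq_nonneg _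
  have hA2 : ∫ ω, f ω ^ 2 ∂P = A ^ 2 := (Real.sq_sqrt hf0).symm
  have hB2 : ∫ ω, g ω ^ 2 ∂P = B ^ 2 := (Real.sq_sqrt hg0).symm
  have hzero : ∀ {h k : Ω → ℝ}, Integrable (fun ω => h ω ^ 2) P →
      (∫ ω, h ω ^ 2 ∂P) = 0 → (fun ω => h ω * k ω) =ᵐ[P] 0 := by
    intro h k hi h0
    have : (fun ω => h ω ^ 2) =ᵐ[P] 0 :=
      (integral_eq_zero_iff_of_nonneg (fun ω => sq_nonneg _) hi).mp h0
    filter_upwards [this] with ω hω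
    have : h ω = 0 := by
      simp only [Pi.zero_apply] at hω ⊢
      exact pow_eq_zero_iff (by norm_num) |>.mp hω
    simp [this]
  rcases eq_or_lt_of_le (Real.sqrt_nonneg _ : (0:ℝ) ≤ A) with hA0 | hA0
  · have hint : ∫ ω, f ω ^ 2 ∂P = 0 := by rw [hA2, hA, ← hA0]; ring
    rw [integral_congr_ae (hzero hf hint)]
    simpa using mul_nonneg (Real.sqrt_nonneg (∫ ω, f ω ^ 2 ∂P)) (Real.sqrt_nonneg (∫ ω, g ω ^ 2 ∂P))
  rcases eq_or_lt_of_le (Real.sqrt_nonneg _ : (0:ℝ) ≤ B) with hB0 | hB0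
  · have hint : ∫ ω, g ω ^ 2 ∂P = 0 := by rw [hB2, hB, ← hB0]; ring
    have heq : (fun ω => f ω * g ω) =ᵐ[P] 0 := by
      filter_upwards [hzero hg hint (k := f)] with ω hω
      simp only [Pi.zero_apply] at hω ⊢
      nlinarith [hω]
    rw [integral_congr_ae heq]
    simpa using mul_nonneg (Real.sqrt_nonneg (∫ ω, f ω ^ 2 ∂P)) (Real.sqrt_nonneg (∫ ω, g ω ^ 2 ∂P))
  have h2 : 0 < A * B := mul_pos hA0 hB0
  have hpt : ∀ ω, f ω * g ω ≤ (B / A * f ω ^ 2 + A / B * g ω ^ 2) / 2 := by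
    intro ω
    rw [le_div_iff₀ (by norm_num : (0:ℝ) < 2), ← mul_le_mul_iff_right₀ h2]
    have e : A * B * (B / A * f ω ^ 2 + A / B * g ω ^ 2) =
        B ^ 2 * f ω ^ 2 + A ^ 2 * g ω ^ 2 := by
      have hA' : A ≠ 0 := ne_of_gt hA0
      have hB' : B ≠ 0 := ne_of_gt hB0
      field_simp
    rw [e]
    nlinarith [sq_nonneg (B * f ω - A * g ω)]
  calc ∫ ω, f ω * g ω ∂P ≤ ∫ ω, (B / A * f ω ^ 2 + A / B * g ω ^ 2) / 2 ∂P :=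
        integral_mono hfg (((hf.const_mul _).add (hg.const_mul _)).div_const 2) hpt
    _ = A * B := by
        rw [integral_div, integral_add (hf.const_mul _) (hg.const_mul _),
          integral_const_mul, integral_const_mul, hA2, hB2]
        field_simp
        ring

/-- Real inner product on Euclidean space as a sum of coordinates. -/
lemma inner_sum_eq {d : ℕ} (x y : EuclideanSpace ℝ (Fin d)) : ⟪x, y⟫ = ∑ i, x i * y i := by
  simp [PiLp.inner_apply, RCLike.inner_apply, conj_trivial, mul_comm]

/-- Inner product with a coordinate vector. -/
lemma inner_single_eq {d : ℕ} (x : EuclideanSpace ℝ (Fin d)) (i : Fin d) :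
    ⟪x, EuclideanSpace.single i (1:ℝ)⟫ = x i := by
  simp [EuclideanSpace.inner_single_right]

lemma toEuclideanCLM_apply_coord {d : ℕ} (A : Matrix (Fin d) (Fin d) ℝ)
    (x : EuclideanSpace ℝ (Fin d)) (i : Fin d) :
    (Matrix.toEuclideanCLM (𝕜 := ℝ) A x) i = ∑ j, A i j * x j := by
  have h := Matrix.ofLp_toEuclideanCLM (𝕜 := ℝ) A x
  have := congrFun h i
  simpa [Matrix.mulVec, dotProduct] using this

lemma inner_toEuclideanCLM {d : ℕ} (A : Matrix (Fin d) (Fin d) ℝ)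
    (x y : EuclideanSpace ℝ (Fin d)) :
    ⟪Matrix.toEuclideanCLM (𝕜 := ℝ) A x, y⟫ = ∑ i, (∑ j, A i j * x j) * y i := by
  rw [inner_sum_eq]
  exact Finset.sum_congr rfl fun i _ => by rw [toEuclideanCLM_apply_coord]

/-- For every `L ≥ 1` there is `c₁(L) > 0` such that for any centered `X` satisfying the
`L₄-L₂` norm equivalence with constant `L` and any `α > 0`, the matrix
`B = 𝔼((Z⊗Z)²)` of the truncation `Z = X 1_{‖X‖₂ ≤ α}` satisfies
`‖B‖ ≤ c₁(L) ‖Σ‖ Tr(Σ)` and `Tr(B) ≤ c₁(L) (Tr Σ)²`. -/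
theorem second_moment_matrix_bounds :
    ∀ L : ℝ, 1 ≤ L → ∃ c₁ : ℝ, 0 < c₁ ∧
      ∀ (Ω : Type*) [MeasurableSpace Ω] (P : Measure Ω) [IsProbabilityMeasure P]
        (d : ℕ) (X : Ω → EuclideanSpace ℝ (Fin d)),
        Measurable X → IsCentered P X → SatisfiesL4L2 P X L →
        ∀ α : ℝ, 0 < α →
          matOpNorm (Matrix.of fun i j =>
              ∫ ω, (outerMat (trunc X α ω) * outerMat (trunc X α ω)) i j ∂P) ≤
            c₁ * matOpNorm (covMat P X) * (covMat P X).trace ∧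
          (Matrix.of fun i j =>
              ∫ ω, (outerMat (trunc X α ω) * outerMat (trunc X α ω)) i j ∂P).trace ≤
            c₁ * (covMat P X).trace ^ 2 := by
  intro L hL
  have hL0 : (0:ℝ) < L := lt_of_lt_of_le one_pos hL
  refine ⟨L ^ 4, pow_pos hL0 4, ?_⟩
  intro Ω _ P _ d X hX hcent hL4 α hα
  set Z : Ω → EuclideanSpace ℝ (Fin d) := trunc X α with hZdef
  set Sg := covMat P X with hSg
  -- measurability of Z and coordinates
  have hZm : Measurable Z := by
    rw [hZdef]
    unfold trunc
    exact Measurable.ite (measurableSet_le hX.norm measurable_const) hX measurable_const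
  have hZi : ∀ i, Measurable fun ω => Z ω i := fun i => ((measurable_pi_apply i).comp (WithLp.measurable_ofLp _ _)).comp hZm
  have hXi : ∀ i, Measurable fun ω => X ω i := fun i => ((measurable_pi_apply i).comp (WithLp.measurable_ofLp _ _)).comp hX
  have hZIm : ∀ u : EuclideanSpace ℝ (Fin d), Measurable fun ω => ⟪Z ω, u⟫ :=
    fun u => hZm.inner measurable_const
  have hXIm : ∀ u : EuclideanSpace ℝ (Fin d), Measurable fun ω => ⟪X ω, u⟫ :=
    fun u => hX.inner measurable_const
  -- bounds on Z
  have hZnorm : ∀ ω, ‖Z ω‖ ≤ α := by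
    intro ω
    rw [hZdef]
    unfold trunc
    split
    · assumption
    · simpa using hα.le
  -- S = ∑ Z_k^2
  set S : Ω → ℝ := fun ω => ∑ k, (Z ω k) ^ 2 with hSdef
  have hSnorm : ∀ ω, S ω = ‖Z ω‖ ^ 2 := by
    intro ω
    rw [hSdef, EuclideanSpace.norm_eq, Real.sq_sqrt (by positivity)]
    simp [sq_abs]
  have hS0 : ∀ ω, 0 ≤ S ω := fun ω => Finset.sum_nonneg fun k _ => sq_nonneg _
  have hSb : ∀ ω, |S ω| ≤ α ^ 2 := by
    intro ω
    rw [abs_of_nonneg (hS0 ω), hSnorm]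
    exact pow_le_pow_left₀ (norm_nonneg _) (hZnorm ω) 2
  have hSm : Measurable S := Finset.measurable_sum _ fun k _ => (hZi k).pow_const 2
  have hsqrtm : Measurable fun ω => Real.sqrt (S ω) :=
    Real.continuous_sqrt.measurable.comp hSm
  have hsqrtb : ∀ ω, |Real.sqrt (S ω)| ≤ α := by
    intro ω
    rw [abs_of_nonneg (Real.sqrt_nonneg _)]
    calc Real.sqrt (S ω) ≤ Real.sqrt (α ^ 2) :=
          Real.sqrt_le_sqrt (by simpa [abs_of_nonneg (hS0 ω)] using hSb ω)
      _ = α := Real.sqrt_sq hα.le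
  have hZb : ∀ (i : Fin d) ω, |Z ω i| ≤ α := by
    intro i ω
    have h := abs_real_inner_le_norm (Z ω) (EuclideanSpace.single i (1:ℝ))
    rw [inner_single_eq] at h
    have h2 : ‖EuclideanSpace.single i (1:ℝ)‖ = 1 := by
      simp [EuclideanSpace.norm_single]
    rw [h2, mul_one] at h
    exact h.trans (hZnorm ω)
  have hZIb : ∀ (u : EuclideanSpace ℝ (Fin d)) ω, |⟪Z ω, u⟫| ≤ α * ‖u‖ := by
    intro u ω
    exact (abs_real_inner_le_norm (Z ω) u).trans
      (mul_le_mul_of_nonneg_right (hZnorm ω) (norm_nonneg u))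
  -- integrability helpers
  have hbint : ∀ (f : Ω → ℝ) (c : ℝ), Measurable f → (∀ ω, |f ω| ≤ c) → Integrable f P := by
    intro f c hm hb
    exact (integrable_const c).mono' hm.aestronglyMeasurable
      (Filter.Eventually.of_forall fun ω => by simpa using hb ω)
  have habs_mul : ∀ {f g : Ω → ℝ} {a b : ℝ}, (∀ ω, |f ω| ≤ a) → (∀ ω, |g ω| ≤ b) →
      ∀ ω, |f ω * g ω| ≤ a * b := by
    intro f g a b hf hg ω
    rw [abs_mul]
    exact mul_le_mul (hf ω) (hg ω) (abs_nonneg _) ((abs_nonneg _).trans (hf ω))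
  have habs_sq : ∀ {f : Ω → ℝ} {a : ℝ}, (∀ ω, |f ω| ≤ a) → ∀ ω, |f ω ^ 2| ≤ a ^ 2 := by
    intro f a hf ω
    rw [abs_pow]
    exact pow_le_pow_left₀ (abs_nonneg _) (hf ω) 2
  -- specific integrable functions built from Z
  have hZij2 : ∀ i j, Integrable (fun ω => (Z ω i) ^ 2 * (Z ω j) ^ 2) P := fun i j =>
    hbint _ (α ^ 2 * α ^ 2) (((hZi i).pow_const 2).mul ((hZi j).pow_const 2))
      (habs_mul (habs_sq (hZb i)) (habs_sq (hZb j)))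
  have hZ4int : ∀ i, Integrable (fun ω => ((Z ω i) ^ 2) ^ 2) P := fun i =>
    hbint _ ((α ^ 2) ^ 2) (((hZi i).pow_const 2).pow_const 2)
      (habs_sq (habs_sq (hZb i)))
  have hZI4int : ∀ u, Integrable (fun ω => (⟪Z ω, u⟫ ^ 2) ^ 2) P := fun u =>
    hbint _ (((α * ‖u‖) ^ 2) ^ 2) (((hZIm u).pow_const 2).pow_const 2)
      (habs_sq (habs_sq (hZIb u)))
  have hZi2I2 : ∀ i u, Integrable (fun ω => (Z ω i) ^ 2 * ⟪Z ω, u⟫ ^ 2) P := fun i u =>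
    hbint _ (α ^ 2 * (α * ‖u‖) ^ 2) (((hZi i).pow_const 2).mul ((hZIm u).pow_const 2))
      (habs_mul (habs_sq (hZb i)) (habs_sq (hZIb u)))
  have hSZZ : ∀ i j, Integrable (fun ω => S ω * (Z ω i * Z ω j)) P := fun i j =>
    hbint _ (α ^ 2 * (α * α)) (hSm.mul ((hZi i).mul (hZi j)))
      (habs_mul hSb (habs_mul (hZb i) (hZb j)))
  -- X side integrability
  have hX4int : ∀ u, Integrable (fun ω => ⟪X ω, u⟫ ^ 4) P := fun u => (hL4 u).1
  have hX2int : ∀ u, Integrable (fun ω => ⟪X ω, u⟫ ^ 2) P := by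
    intro u
    refine ((hX4int u).add (integrable_const 1)).mono'
      ((hXIm u).pow_const 2).aestronglyMeasurable
      (Filter.Eventually.of_forall fun ω => ?_)
    simp only [Pi.add_apply]
    rw [Real.norm_eq_abs, abs_of_nonneg (sq_nonneg _)]
    nlinarith [sq_nonneg (⟪X ω, u⟫ ^ 2 - 1), sq_nonneg ⟪X ω, u⟫]
  have hX2c : ∀ i, Integrable (fun ω => (X ω i) ^ 2) P := by
    intro i
    have h := hX2int (EuclideanSpace.single i (1:ℝ))
    simpa only [inner_single_eq] using h
  have hXij : ∀ i j, Integrable (fun ω => X ω i * X ω j) P := by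
    intro i j
    refine (((hX2c i).add (hX2c j)).div_const 2).mono'
      ((hXi i).mul (hXi j)).aestronglyMeasurable
      (Filter.Eventually.of_forall fun ω => ?_)
    simp only [Pi.add_apply]
    rw [Real.norm_eq_abs, abs_mul]
    nlinarith [sq_nonneg (|X ω i| - |X ω j|), sq_abs (X ω i), sq_abs (X ω j),
      abs_nonneg (X ω i), abs_nonneg (X ω j)]
  -- covariance facts
  have hSgd : ∀ i, Sg i i = ∫ ω, (X ω i) ^ 2 ∂P := by
    intro i
    rw [hSg]
    show (∫ ω, X ω i * X ω i ∂P) = _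
    exact integral_congr_ae (Filter.Eventually.of_forall fun ω => (pow_two _).symm)
  have hSgdnn : ∀ i, 0 ≤ Sg i i := by
    intro i
    rw [hSgd]
    exact integral_nonneg fun ω => sq_nonneg _
  have htrace : Sg.trace = ∑ i, Sg i i := rfl
  have htrnn : 0 ≤ Sg.trace := by
    rw [htrace]; exact Finset.sum_nonneg fun i _ => hSgdnn i
  -- quadratic form bound
  have hQle : ∀ u : EuclideanSpace ℝ (Fin d),
      ∫ ω, ⟪X ω, u⟫ ^ 2 ∂P ≤ matOpNorm Sg * ‖u‖ ^ 2 := by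
    intro u
    have hexp : (fun ω => ⟪X ω, u⟫ ^ 2) =
        fun ω => ∑ i, ∑ j, (u i * u j) * (X ω i * X ω j) := by
      funext ω
      rw [pow_two, inner_sum_eq, Finset.sum_mul_sum]
      exact Finset.sum_congr rfl fun i _ => Finset.sum_congr rfl fun j _ => by ring
    have hval : ∫ ω, ⟪X ω, u⟫ ^ 2 ∂P = ∑ i, ∑ j, (u i * u j) * Sg i j := by
      rw [hexp, integral_finset_sum _ fun i _ =>
        integrable_finset_sum _ fun j _ => (hXij i j).const_mul _]
      refine Finset.sum_congr rfl fun i _ => ?_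
      rw [integral_finset_sum _ fun j _ => (hXij i j).const_mul _]
      exact Finset.sum_congr rfl fun j _ => integral_const_mul _ _
    have hinner : ⟪Matrix.toEuclideanCLM (𝕜 := ℝ) Sg u, u⟫ =
        ∑ i, ∑ j, (u i * u j) * Sg i j := by
      rw [inner_toEuclideanCLM]
      refine Finset.sum_congr rfl fun i _ => ?_
      rw [Finset.sum_mul]
      exact Finset.sum_congr rfl fun j _ => by ring
    rw [hval, ← hinner]
    calc ⟪Matrix.toEuclideanCLM (𝕜 := ℝ) Sg u, u⟫
        ≤ ‖Matrix.toEuclideanCLM (𝕜 := ℝ) Sg u‖ * ‖u‖ := real_inner_le_norm _ _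
      _ ≤ ‖Matrix.toEuclideanCLM (𝕜 := ℝ) Sg‖ * ‖u‖ * ‖u‖ :=
          mul_le_mul_of_nonneg_right ((Matrix.toEuclideanCLM (𝕜 := ℝ) Sg).le_opNorm u)
            (norm_nonneg u)
      _ = matOpNorm Sg * ‖u‖ ^ 2 := by rw [matOpNorm]; ring
  have hXI2nn : ∀ u : EuclideanSpace ℝ (Fin d), 0 ≤ ∫ ω, ⟪X ω, u⟫ ^ 2 ∂P :=
    fun u => integral_nonneg fun ω => sq_nonneg _
  -- fourth moment bound for X
  have hmom : ∀ u, ∫ ω, ⟪X ω, u⟫ ^ 4 ∂P ≤ L ^ 4 * (∫ ω, ⟪X ω, u⟫ ^ 2 ∂P) ^ 2 := by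
    intro u
    obtain ⟨hi, hle⟩ := hL4 u
    set a := ∫ ω, ⟪X ω, u⟫ ^ 4 ∂P with ha'
    set b := ∫ ω, ⟪X ω, u⟫ ^ 2 ∂P with hb'
    have ha : 0 ≤ a := integral_nonneg fun ω => by positivity
    have hb : 0 ≤ b := hXI2nn u
    have h := pow_le_pow_left₀ (Real.rpow_nonneg ha _) hle 4
    have e1 : (a ^ ((1:ℝ)/4)) ^ (4:ℕ) = a := by
      rw [← Real.rpow_natCast (a ^ ((1:ℝ)/4)) 4, ← Real.rpow_mul ha]
      norm_num
    have e2 : (b ^ ((1:ℝ)/2)) ^ (4:ℕ) = b ^ 2 := by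
      rw [← Real.rpow_natCast (b ^ ((1:ℝ)/2)) 4, ← Real.rpow_mul hb]
      norm_num
    rw [e1, mul_pow, e2] at h
    exact h
  -- Z moments dominated by X moments
  have hZ4le : ∀ u, ∫ ω, ⟪Z ω, u⟫ ^ 4 ∂P ≤ ∫ ω, ⟪X ω, u⟫ ^ 4 ∂P := by
    intro u
    refine integral_mono (hbint _ ((α * ‖u‖) ^ 2 * (α * ‖u‖) ^ 2)
      ((hZIm u).pow_const 4) ?_) (hX4int u) ?_
    · intro ω
      have h4 : ⟪Z ω, u⟫ ^ 4 = (⟪Z ω, u⟫ ^ 2) * (⟪Z ω, u⟫ ^ 2) := by ring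
      rw [h4]
      exact habs_mul (habs_sq (hZIb u)) (habs_sq (hZIb u)) ω
    · intro ω
      rw [hZdef]
      unfold trunc
      beta_reduce
      split
      · exact le_refl _
      · have h0 : (0:ℝ) ≤ ⟪X ω, u⟫ ^ 4 := by positivity
        simpa [inner_zero_left] using h0
  have hsqrt4 : ∀ u, Real.sqrt (∫ ω, ⟪Z ω, u⟫ ^ 4 ∂P) ≤ L ^ 2 * ∫ ω, ⟪X ω, u⟫ ^ 2 ∂P := by
    intro u
    calc Real.sqrt (∫ ω, ⟪Z ω, u⟫ ^ 4 ∂P)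
        ≤ Real.sqrt (L ^ 4 * (∫ ω, ⟪X ω, u⟫ ^ 2 ∂P) ^ 2) :=
          Real.sqrt_le_sqrt ((hZ4le u).trans (hmom u))
      _ = L ^ 2 * ∫ ω, ⟪X ω, u⟫ ^ 2 ∂P := by
          rw [show L ^ 4 * (∫ ω, ⟪X ω, u⟫ ^ 2 ∂P) ^ 2 =
            (L ^ 2 * ∫ ω, ⟪X ω, u⟫ ^ 2 ∂P) ^ 2 by ring]
          exact Real.sqrt_sq (mul_nonneg (by positivity) (hXI2nn u))
  have hpow4 : ∀ x : ℝ, (x ^ 2) ^ 2 = x ^ 4 := fun x => by ring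
  have hZ4c : ∀ i, Real.sqrt (∫ ω, ((Z ω i) ^ 2) ^ 2 ∂P) ≤ L ^ 2 * Sg i i := by
    intro i
    have h := hsqrt4 (EuclideanSpace.single i (1:ℝ))
    simp only [inner_single_eq] at h
    rw [← hSgd i] at h
    simpa only [hpow4] using h
  have hZI4c : ∀ u, Real.sqrt (∫ ω, (⟪Z ω, u⟫ ^ 2) ^ 2 ∂P) ≤
      L ^ 2 * (matOpNorm Sg * ‖u‖ ^ 2) := by
    intro u
    have h := hsqrt4 u
    simp only [hpow4]
    exact h.trans (mul_le_mul_of_nonneg_left (hQle u) (by positivity))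
  -- entries of the matrix B
  have hBent : ∀ i j, (Matrix.of fun i j =>
      ∫ ω, (outerMat (Z ω) * outerMat (Z ω)) i j ∂P) i j
      = ∫ ω, S ω * (Z ω i * Z ω j) ∂P := by
    intro i j
    simp only [Matrix.of_apply]
    refine integral_congr_ae (Filter.Eventually.of_forall fun ω => ?_)
    simp only [outerMat, Matrix.mul_apply, Matrix.of_apply, hSdef]
    rw [Finset.sum_mul]
    exact Finset.sum_congr rfl fun k _ => by ring
  -- Cauchy-Schwarz coordinate bound
  have hCSij : ∀ i j, ∫ ω, (Z ω i) ^ 2 * (Z ω j) ^ 2 ∂P ≤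
      (L ^ 2 * Sg i i) * (L ^ 2 * Sg j j) := by
    intro i j
    have h := integral_mul_le_sqrt_mul_sqrt (hZ4int i) (hZ4int j) (hZij2 i j)
    refine h.trans (mul_le_mul (hZ4c i) (hZ4c j) (Real.sqrt_nonneg _)
      (mul_nonneg (by positivity) (hSgdnn i)))
  -- TRACE BOUND
  have htraceB : (Matrix.of fun i j =>
      ∫ ω, (outerMat (Z ω) * outerMat (Z ω)) i j ∂P).trace ≤ L ^ 4 * Sg.trace ^ 2 := by
    have h1 : (Matrix.of fun i j =>
        ∫ ω, (outerMat (Z ω) * outerMat (Z ω)) i j ∂P).trace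
        = ∑ i, ∑ k, ∫ ω, (Z ω k) ^ 2 * (Z ω i) ^ 2 ∂P := by
      rw [Matrix.trace]
      refine Finset.sum_congr rfl fun i _ => ?_
      have h2 : Matrix.diag (Matrix.of fun i j =>
          ∫ ω, (outerMat (Z ω) * outerMat (Z ω)) i j ∂P) i
          = ∫ ω, S ω * (Z ω i * Z ω i) ∂P := hBent i i
      rw [h2]
      rw [show (fun ω => S ω * (Z ω i * Z ω i)) =
          fun ω => ∑ k, (Z ω k) ^ 2 * (Z ω i) ^ 2 from funext fun ω => by
        simp only [hSdef]
        rw [Finset.sum_mul]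
        exact Finset.sum_congr rfl fun k _ => by ring]
      exact integral_finset_sum _ fun k _ => hZij2 k i
    rw [h1]
    calc ∑ i, ∑ k, ∫ ω, (Z ω k) ^ 2 * (Z ω i) ^ 2 ∂P
        ≤ ∑ i, ∑ k, (L ^ 2 * Sg k k) * (L ^ 2 * Sg i i) :=
          Finset.sum_le_sum fun i _ => Finset.sum_le_sum fun k _ => hCSij k i
      _ = L ^ 4 * Sg.trace ^ 2 := by
          rw [htrace]
          rw [show (∑ i, Sg i i) ^ 2 = ∑ i, ∑ k, Sg i i * Sg k k by
            rw [pow_two, Finset.sum_mul_sum]]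
          rw [Finset.mul_sum]
          refine Finset.sum_congr rfl fun i _ => ?_
          rw [Finset.mul_sum]
          exact Finset.sum_congr rfl fun k _ => by ring
  -- NORM BOUND
  have hAb : ∀ u : EuclideanSpace ℝ (Fin d), ∫ ω, S ω * ⟪Z ω, u⟫ ^ 2 ∂P ≤
      L ^ 4 * matOpNorm Sg * Sg.trace * ‖u‖ ^ 2 := by
    intro u
    have hstep : ∫ ω, S ω * ⟪Z ω, u⟫ ^ 2 ∂P
        = ∑ i, ∫ ω, (Z ω i) ^ 2 * ⟪Z ω, u⟫ ^ 2 ∂P := by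
      rw [show (fun ω => S ω * ⟪Z ω, u⟫ ^ 2) =
          fun ω => ∑ i, (Z ω i) ^ 2 * ⟪Z ω, u⟫ ^ 2 from funext fun ω => by
        simp only [hSdef]
        rw [Finset.sum_mul]]
      exact integral_finset_sum _ fun i _ => hZi2I2 i u
    rw [hstep]
    calc ∑ i, ∫ ω, (Z ω i) ^ 2 * ⟪Z ω, u⟫ ^ 2 ∂P
        ≤ ∑ i, (L ^ 2 * Sg i i) * (L ^ 2 * (matOpNorm Sg * ‖u‖ ^ 2)) := by
          refine Finset.sum_le_sum fun i _ => ?_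
          have h := integral_mul_le_sqrt_mul_sqrt (hZ4int i) (hZI4int u) (hZi2I2 i u)
          exact h.trans (mul_le_mul (hZ4c i) (hZI4c u) (Real.sqrt_nonneg _)
            (mul_nonneg (by positivity) (hSgdnn i)))
      _ = L ^ 4 * matOpNorm Sg * Sg.trace * ‖u‖ ^ 2 := by
          rw [← Finset.sum_mul, ← Finset.mul_sum, ← htrace]
          ring
  have hC0 : 0 ≤ L ^ 4 * matOpNorm Sg * Sg.trace := by
    have : (0:ℝ) ≤ matOpNorm Sg := norm_nonneg _
    have h4 : (0:ℝ) ≤ L ^ 4 := by positivity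
    exact mul_nonneg (mul_nonneg h4 this) htrnn
  -- inner product formula for the operator of B
  have hTin : ∀ t s : EuclideanSpace ℝ (Fin d),
      ⟪Matrix.toEuclideanCLM (𝕜 := ℝ) (Matrix.of fun i j =>
        ∫ ω, (outerMat (Z ω) * outerMat (Z ω)) i j ∂P) t, s⟫
      = ∫ ω, S ω * (⟪Z ω, t⟫ * ⟪Z ω, s⟫) ∂P := by
    intro t s
    have hint_ij : ∀ i j, Integrable
        (fun ω => (S ω * (Z ω i * Z ω j)) * (t j * s i)) P :=
      fun i j => (hSZZ i j).mul_const _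
    have hexp : (fun ω => S ω * (⟪Z ω, t⟫ * ⟪Z ω, s⟫)) =
        fun ω => ∑ i, ∑ j, (S ω * (Z ω i * Z ω j)) * (t j * s i) := by
      funext ω
      rw [inner_sum_eq (Z ω) t, inner_sum_eq (Z ω) s]
      rw [Finset.sum_mul_sum, Finset.mul_sum]
      rw [Finset.sum_comm]
      refine Finset.sum_congr rfl fun i _ => ?_
      rw [Finset.mul_sum]
      exact Finset.sum_congr rfl fun j _ => by ring
    rw [inner_toEuclideanCLM, hexp]
    rw [integral_finset_sum _ fun i _ => integrable_finset_sum _ fun j _ => hint_ij i j]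
    refine Finset.sum_congr rfl fun i _ => ?_
    rw [integral_finset_sum _ fun j _ => hint_ij i j, Finset.sum_mul]
    refine Finset.sum_congr rfl fun j _ => ?_
    rw [hBent i j, integral_mul_const, mul_assoc]
  -- main Cauchy-Schwarz for the bilinear form
  have hCS2 : ∀ t s : EuclideanSpace ℝ (Fin d),
      ⟪Matrix.toEuclideanCLM (𝕜 := ℝ) (Matrix.of fun i j =>
        ∫ ω, (outerMat (Z ω) * outerMat (Z ω)) i j ∂P) t, s⟫
      ≤ L ^ 4 * matOpNorm Sg * Sg.trace * ‖t‖ * ‖s‖ := by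
    intro t s
    rw [hTin t s]
    have hfg : (fun ω => S ω * (⟪Z ω, t⟫ * ⟪Z ω, s⟫)) =
        fun ω => (Real.sqrt (S ω) * ⟪Z ω, t⟫) * (Real.sqrt (S ω) * ⟪Z ω, s⟫) := by
      funext ω
      have h := Real.mul_self_sqrt (hS0 ω)
      linear_combination (⟪Z ω, t⟫ * ⟪Z ω, s⟫) * h.symm
    have hfint : ∀ u : EuclideanSpace ℝ (Fin d),
        Integrable (fun ω => (Real.sqrt (S ω) * ⟪Z ω, u⟫) ^ 2) P := fun u =>
      hbint _ ((α * (α * ‖u‖)) ^ 2) ((hsqrtm.mul (hZIm u)).pow_const 2)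
        (habs_sq (habs_mul hsqrtb (hZIb u)))
    have hfgint : Integrable (fun ω =>
        (Real.sqrt (S ω) * ⟪Z ω, t⟫) * (Real.sqrt (S ω) * ⟪Z ω, s⟫)) P :=
      hbint _ ((α * (α * ‖t‖)) * (α * (α * ‖s‖)))
        ((hsqrtm.mul (hZIm t)).mul (hsqrtm.mul (hZIm s)))
        (habs_mul (habs_mul hsqrtb (hZIb t)) (habs_mul hsqrtb (hZIb s)))
    rw [hfg]
    have hCS := integral_mul_le_sqrt_mul_sqrt (hfint t) (hfint s) hfgint
    refine hCS.trans ?_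
    have hsq : ∀ u : EuclideanSpace ℝ (Fin d),
        ∫ ω, (Real.sqrt (S ω) * ⟪Z ω, u⟫) ^ 2 ∂P = ∫ ω, S ω * ⟪Z ω, u⟫ ^ 2 ∂P := by
      intro u
      refine integral_congr_ae (Filter.Eventually.of_forall fun ω => ?_)
      beta_reduce
      rw [mul_pow, Real.sq_sqrt (hS0 ω)]
    rw [hsq t, hsq s]
    have hkey : ∀ u : EuclideanSpace ℝ (Fin d),
        Real.sqrt (∫ ω, S ω * ⟪Z ω, u⟫ ^ 2 ∂P) ≤
        Real.sqrt (L ^ 4 * matOpNorm Sg * Sg.trace) * ‖u‖ := by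
      intro u
      calc Real.sqrt (∫ ω, S ω * ⟪Z ω, u⟫ ^ 2 ∂P)
          ≤ Real.sqrt (L ^ 4 * matOpNorm Sg * Sg.trace * ‖u‖ ^ 2) :=
            Real.sqrt_le_sqrt (hAb u)
        _ = Real.sqrt (L ^ 4 * matOpNorm Sg * Sg.trace) * ‖u‖ := by
            rw [Real.sqrt_mul hC0, Real.sqrt_sq (norm_nonneg u)]
    calc Real.sqrt (∫ ω, S ω * ⟪Z ω, t⟫ ^ 2 ∂P) * Real.sqrt (∫ ω, S ω * ⟪Z ω, s⟫ ^ 2 ∂P)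
        ≤ (Real.sqrt (L ^ 4 * matOpNorm Sg * Sg.trace) * ‖t‖) *
          (Real.sqrt (L ^ 4 * matOpNorm Sg * Sg.trace) * ‖s‖) :=
          mul_le_mul (hkey t) (hkey s) (Real.sqrt_nonneg _)
            (mul_nonneg (Real.sqrt_nonneg _) (norm_nonneg _))
      _ = L ^ 4 * matOpNorm Sg * Sg.trace * ‖t‖ * ‖s‖ := by
          rw [show (Real.sqrt (L ^ 4 * matOpNorm Sg * Sg.trace) * ‖t‖) *
            (Real.sqrt (L ^ 4 * matOpNorm Sg * Sg.trace) * ‖s‖) =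
            (Real.sqrt (L ^ 4 * matOpNorm Sg * Sg.trace) *
             Real.sqrt (L ^ 4 * matOpNorm Sg * Sg.trace)) * (‖t‖ * ‖s‖) by ring,
            Real.mul_self_sqrt hC0]
          ring
  constructor
  · -- operator norm bound
    show ‖Matrix.toEuclideanCLM (𝕜 := ℝ) (Matrix.of fun i j =>
        ∫ ω, (outerMat (Z ω) * outerMat (Z ω)) i j ∂P)‖ ≤ L ^ 4 * matOpNorm Sg * Sg.trace
    refine ContinuousLinearMap.opNorm_le_bound _ hC0 fun t => ?_
    set Tt := Matrix.toEuclideanCLM (𝕜 := ℝ) (Matrix.of fun i j =>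
        ∫ ω, (outerMat (Z ω) * outerMat (Z ω)) i j ∂P) t with hTt
    rcases eq_or_lt_of_le (norm_nonneg Tt) with h0 | h0
    · rw [← h0]
      exact mul_nonneg hC0 (norm_nonneg t)
    · have h := hCS2 t Tt
      rw [real_inner_self_eq_norm_sq] at h
      nlinarith [h0, norm_nonneg t]
  · exact htraceB
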